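/- Let g and h be integers with g ≥ h ≥ 2. Let A be a finite nonempty C_h[g] set of integers and let B be a finite set of integers with |B| ≥ h. Then |A|^{h/(h-1)} ≤ |A + B| · ( (g-1)^{1/(h-1)} + (h-1)|A|^{1/(h-1)} / |B| ), where A + B = {a + b : a ∈ A, b ∈ B} is the sumset. -/

import Mathlib

open Pointwise
open Finset

/-- `A` is a `C_h[g]` set: there do not exist a set `X` of `h` integers and `g` pairwise
distinct integers `k_1, …, k_g` such that `X + k_i ⊆ A` for every `i`. -/
def IsChgSet (h g : ℕ) (A : Set ℤ) : Prop :=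
  ¬ ∃ (X : Finset ℤ) (k : Fin g → ℤ), X.card = h ∧ Function.Injective k ∧
      ∀ i : Fin g, ∀ x ∈ X, x + k i ∈ A

lemma perT_bound (g h : ℕ) (A : Finset ℤ) (hChg : IsChgSet h g ↑A) (hg : 1 ≤ g)
    (S T : Finset ℤ) (hT : T.card = h) :
    (S.filter fun x => ∀ b ∈ T, x - b ∈ A).card ≤ g - 1 := by
  by_contra hc
  push_neg at hc
  have hgle : g ≤ (S.filter fun x => ∀ b ∈ T, x - b ∈ A).card := by omega
  obtain ⟨G, hGsub, hGcard⟩ := Finset.exists_subset_card_eq hgle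
  apply hChg
  refine ⟨T.image (fun t => -t), fun i => G.orderEmbOfFin hGcard i, ?_, ?_, ?_⟩
  · rw [Finset.card_image_of_injective _ neg_injective, hT]
  · intro i j hij
    exact (G.orderEmbOfFin hGcard).injective hij
  · intro i x hx
    simp only [Finset.mem_image] at hx
    obtain ⟨b, hb, rfl⟩ := hx
    have hmem : G.orderEmbOfFin hGcard i ∈ G := Finset.orderEmbOfFin_mem G hGcard i
    have h2 := (Finset.mem_filter.mp (hGsub hmem)).2 b hb
    simpa [neg_add_eq_sub] using h2

lemma stepA (g h : ℕ) (A B : Finset ℤ) (hChg : IsChgSet h g ↑A) (hg : 1 ≤ g) :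
    ∑ x ∈ A + B, ((B.filter fun b => x - b ∈ A).card).choose h
      ≤ (g - 1) * (B.card).choose h := by
  classical
  have key : ∀ x : ℤ, ((B.filter fun b => x - b ∈ A).card).choose h
      = ((B.powersetCard h).filter fun T => ∀ b ∈ T, x - b ∈ A).card := by
    intro x
    rw [← Finset.card_powersetCard]
    congr 1
    ext T
    simp only [Finset.mem_powersetCard, Finset.mem_filter]
    constructor
    · rintro ⟨hsub, hcard⟩
      exact ⟨⟨fun b hb => (Finset.mem_filter.mp (hsub hb)).1, hcard⟩,
        fun b hb => (Finset.mem_filter.mp (hsub hb)).2⟩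
    · rintro ⟨⟨hsub, hcard⟩, hall⟩
      exact ⟨fun b hb => Finset.mem_filter.mpr ⟨hsub hb, hall _ hb⟩, hcard⟩
  calc ∑ x ∈ A + B, ((B.filter fun b => x - b ∈ A).card).choose h
      = ∑ x ∈ A + B, ∑ T ∈ B.powersetCard h, if ∀ b ∈ T, x - b ∈ A then 1 else 0 := by
        simp_rw [key, Finset.card_filter]
    _ = ∑ T ∈ B.powersetCard h, ((A + B).filter fun x => ∀ b ∈ T, x - b ∈ A).card := by
        rw [Finset.sum_comm]
        exact Finset.sum_congr rfl fun T _ => (Finset.card_filter _ _).symm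
    _ ≤ ∑ _T ∈ B.powersetCard h, (g - 1) :=
        Finset.sum_le_sum fun T hT =>
          perT_bound g h A hChg hg _ T (Finset.mem_powersetCard.mp hT).2
    _ = (B.card).choose h * (g - 1) := by
        rw [Finset.sum_const, Finset.card_powersetCard, smul_eq_mul]
    _ = (g - 1) * (B.card).choose h := mul_comm _ _

lemma stepC (A B : Finset ℤ) :
    ∑ x ∈ A + B, (B.filter fun b => x - b ∈ A).card = A.card * B.card := by
  classical
  rw [← Finset.card_product]
  rw [Finset.card_eq_sum_card_fiberwise (f := fun p : ℤ × ℤ => p.1 + p.2) (t := A + B)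
    (fun p hp => Finset.add_mem_add (Finset.mem_product.mp hp).1 (Finset.mem_product.mp hp).2)]
  apply Finset.sum_congr rfl
  intro x hx
  apply Finset.card_bij (fun (b : ℤ) _ => ((x - b, b) : ℤ × ℤ))
  · intro b hb
    simp only [Finset.mem_filter, Finset.mem_product] at hb ⊢
    exact ⟨⟨hb.2, hb.1⟩, by ring⟩
  · intro b₁ h₁ b₂ h₂ heq
    exact congrArg Prod.snd heq
  · intro p hp
    simp only [Finset.mem_filter, Finset.mem_product] at hp
    refine ⟨p.2, Finset.mem_filter.mpr ⟨hp.1.2, ?_⟩, ?_⟩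
    · have := hp.2; have := hp.1.1; rw [show x - p.2 = p.1 by omega]; exact this
    · have : x - p.2 = p.1 := by have := hp.2; omega
      rw [this]

lemma pointwise_bound (h : ℕ) (hh : 2 ≤ h) (r : ℕ) :
    (r : ℝ) * (max ((r : ℝ) - ((h : ℝ) - 1)) 0) ^ (h - 1)
      ≤ (h.factorial : ℝ) * ((r.choose h : ℕ) : ℝ) := by
  have hhR : (2 : ℝ) ≤ (h : ℝ) := by exact_mod_cast hh
  rcases lt_or_ge r h with hr | hr
  · have hrR : (r : ℝ) ≤ (h : ℝ) - 1 := by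
      have : r ≤ h - 1 := by omega
      have := (Nat.cast_le (α := ℝ)).mpr this
      have hc : ((h - 1 : ℕ) : ℝ) = (h : ℝ) - 1 := by
        have : 1 ≤ h := by omega
        push_cast [this]; ring
      linarith [hc ▸ ‹((r : ℕ) : ℝ) ≤ ((h - 1 : ℕ) : ℝ)›]
    have hmax : max ((r : ℝ) - ((h : ℝ) - 1)) 0 = 0 := max_eq_right (by linarith)
    rw [hmax, zero_pow (by omega : h - 1 ≠ 0), mul_zero]
    positivity
  · have hrR : ((h : ℝ)) ≤ (r : ℝ) := by exact_mod_cast hr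
    have hfc : (h.factorial : ℝ) * ((r.choose h : ℕ) : ℝ) = ((r.descFactorial h : ℕ) : ℝ) := by
      rw [Nat.descFactorial_eq_factorial_mul_choose]; push_cast; ring
    rw [hfc]
    have hmax : max ((r : ℝ) - ((h : ℝ) - 1)) 0 = (r : ℝ) - ((h : ℝ) - 1) :=
      max_eq_left (by linarith)
    rw [hmax]
    have hprod : ((r.descFactorial h : ℕ) : ℝ) = ∏ i ∈ Finset.range h, ((r : ℝ) - i) := by
      rw [Nat.descFactorial_eq_prod_range]
      push_cast
      refine Finset.prod_congr rfl fun i hi => ?_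
      have hir : i ≤ r := le_trans (Nat.le_of_lt (Finset.mem_range.mp hi)) hr
      push_cast [hir]
      ring
    rw [hprod]
    have hsplit : ∏ i ∈ Finset.range h, ((r : ℝ) - i)
        = (∏ i ∈ Finset.range (h - 1), ((r : ℝ) - ((i : ℕ) + 1 : ℕ))) * ((r : ℝ) - (0 : ℕ)) := by
      conv_lhs => rw [show h = (h - 1) + 1 by omega]
      rw [Finset.prod_range_succ']
    rw [hsplit]
    have hbound : ((r : ℝ) - ((h : ℝ) - 1)) ^ (h - 1)
        ≤ ∏ i ∈ Finset.range (h - 1), ((r : ℝ) - ((i : ℕ) + 1 : ℕ)) := by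
      rw [show ((r : ℝ) - ((h : ℝ) - 1)) ^ (h - 1)
          = ∏ _i ∈ Finset.range (h - 1), ((r : ℝ) - ((h : ℝ) - 1)) by
        rw [Finset.prod_const, Finset.card_range]]
      refine Finset.prod_le_prod (fun i _ => by linarith) fun i hi => ?_
      have hi' : i + 1 ≤ h - 1 := by
        have := Finset.mem_range.mp hi; omega
      have : ((i + 1 : ℕ) : ℝ) ≤ (h : ℝ) - 1 := by
        have := (Nat.cast_le (α := ℝ)).mpr hi'
        have hc : ((h - 1 : ℕ) : ℝ) = (h : ℝ) - 1 := by
          have : 1 ≤ h := by omega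
          push_cast [this]; ring
        linarith [hc ▸ ‹((i + 1 : ℕ) : ℝ) ≤ ((h - 1 : ℕ) : ℝ)›]
      push_cast at this ⊢
      linarith
    have hr0 : (0 : ℝ) ≤ (r : ℝ) := Nat.cast_nonneg r
    calc (r : ℝ) * ((r : ℝ) - ((h : ℝ) - 1)) ^ (h - 1)
        ≤ (r : ℝ) * ∏ i ∈ Finset.range (h - 1), ((r : ℝ) - ((i : ℕ) + 1 : ℕ)) :=
          mul_le_mul_of_nonneg_left hbound hr0
      _ = (∏ i ∈ Finset.range (h - 1), ((r : ℝ) - ((i : ℕ) + 1 : ℕ))) * ((r : ℝ) - (0 : ℕ)) := by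
          push_cast; ring

theorem stmt8 (g h : ℕ) (hgh : h ≤ g) (hh : 2 ≤ h)
    (A B : Finset ℤ) (hA : A.Nonempty) (hChg : IsChgSet h g ↑A) (hB : h ≤ B.card) :
    (A.card : ℝ) ^ ((h : ℝ) / ((h : ℝ) - 1)) ≤
      ((A + B).card : ℝ) *
        (((g : ℝ) - 1) ^ ((1 : ℝ) / ((h : ℝ) - 1)) +
          ((h : ℝ) - 1) * (A.card : ℝ) ^ ((1 : ℝ) / ((h : ℝ) - 1)) / (B.card : ℝ)) := by
  classical
  have hg2 : 2 ≤ g := le_trans hh hgh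
  set S : Finset ℤ := A + B with hSdef
  set n : ℕ := A.card with hndef
  set m : ℕ := B.card with hmdef
  set s : ℕ := S.card with hsdef
  have hB' : B.Nonempty := Finset.card_pos.mp (by omega)
  have hn1 : 1 ≤ n := Finset.card_pos.mpr hA
  have hm2 : 2 ≤ m := le_trans hh hB
  have hS' : S.Nonempty := hA.add hB'
  have hs1 : 1 ≤ s := Finset.card_pos.mpr hS'
  -- real facts
  have hhR : (2 : ℝ) ≤ (h : ℝ) := by exact_mod_cast hh
  have hgR : (2 : ℝ) ≤ (g : ℝ) := by exact_mod_cast hg2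
  have hnR : (1 : ℝ) ≤ (n : ℝ) := by exact_mod_cast hn1
  have hmR : (2 : ℝ) ≤ (m : ℝ) := by exact_mod_cast hm2
  have hsR : (1 : ℝ) ≤ (s : ℝ) := by exact_mod_cast hs1
  have hm0 : (0 : ℝ) < (m : ℝ) := by linarith
  have hh1ne : (h : ℝ) - 1 ≠ 0 := by linarith
  set e : ℝ := (1 : ℝ) / ((h : ℝ) - 1) with hedef
  have he0 : 0 < e := div_pos one_pos (by linarith)
  set u : ℝ := (n : ℝ) ^ e with hudef
  set c : ℝ := ((g : ℝ) - 1) ^ e with hcdef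
  have hu0 : 0 ≤ u := Real.rpow_nonneg (by positivity) e
  have hc0 : 0 ≤ c := Real.rpow_nonneg (by linarith) e
  have hcast_h1 : ((h - 1 : ℕ) : ℝ) = (h : ℝ) - 1 := by
    have : 1 ≤ h := by omega
    push_cast [this]; ring
  -- exponent identities
  have hu_pow : u ^ (h - 1) = (n : ℝ) := by
    rw [hudef, ← Real.rpow_natCast ((n : ℝ) ^ e) (h - 1), ← Real.rpow_mul (by positivity)]
    rw [hcast_h1, hedef, one_div, inv_mul_cancel₀ hh1ne, Real.rpow_one]
  have hc_pow : c ^ (h - 1) = (g : ℝ) - 1 := by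
    rw [hcdef, ← Real.rpow_natCast (((g : ℝ) - 1) ^ e) (h - 1), ← Real.rpow_mul (by linarith)]
    rw [hcast_h1, hedef, one_div, inv_mul_cancel₀ hh1ne, Real.rpow_one]
  have hgoal_exp : (n : ℝ) ^ ((h : ℝ) / ((h : ℝ) - 1)) = (n : ℝ) * u := by
    have h1 : (h : ℝ) / ((h : ℝ) - 1) = 1 + e := by
      rw [hedef]; field_simp; ring
    rw [h1, Real.rpow_add (by linarith), Real.rpow_one, hudef]
  rw [hgoal_exp]
  -- reduce goal to : n * u ≤ c * s + (h-1) * s * u / m, i.e. show n*u*m ≤ (...)*m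
  rw [show ((S.card : ℝ) * (((g : ℝ) - 1) ^ ((1:ℝ)/((h:ℝ)-1)) +
      ((h : ℝ) - 1) * (n : ℝ) ^ ((1:ℝ)/((h:ℝ)-1)) / (m : ℝ)))
      = (s : ℝ) * (c + ((h : ℝ) - 1) * u / (m : ℝ)) by rw [hcdef, hudef, hedef]]
  have hmain : (n : ℝ) * (m : ℝ) * u ≤ c * ((m : ℝ) * (s : ℝ)) + ((h : ℝ) - 1) * (s : ℝ) * u := by
    set r : ℤ → ℕ := fun x => (B.filter fun b => x - b ∈ A).card with hrdef
    set a : ℤ → ℝ := fun x => max ((r x : ℝ) - ((h : ℝ) - 1)) 0 with hadef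
    have ha0 : ∀ x, 0 ≤ a x := fun x => le_max_right _ _
    have F1 : ∑ x ∈ S, (r x).choose h ≤ (g - 1) * m.choose h := stepA g h A B hChg (by omega)
    have F2 : ∑ x ∈ S, r x = n * m := stepC A B
    have sumR : ∑ x ∈ S, (r x : ℝ) = (n : ℝ) * (m : ℝ) := by exact_mod_cast congrArg (Nat.cast (R := ℝ)) F2
    have F4 : (h.factorial : ℝ) * ((m.choose h : ℕ) : ℝ) ≤ (m : ℝ) ^ h := by
      have := Nat.descFactorial_le_pow m h
      have heq : h.factorial * m.choose h = m.descFactorial h :=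
        (Nat.descFactorial_eq_factorial_mul_choose m h).symm
      calc (h.factorial : ℝ) * ((m.choose h : ℕ) : ℝ) = ((m.descFactorial h : ℕ) : ℝ) := by
            exact_mod_cast congrArg (Nat.cast (R := ℝ)) heq
        _ ≤ (m : ℝ) ^ h := by exact_mod_cast this
    have sumProd : ∑ x ∈ S, (r x : ℝ) * (a x) ^ (h - 1) ≤ ((g : ℝ) - 1) * (m : ℝ) ^ h := by
      calc ∑ x ∈ S, (r x : ℝ) * (a x) ^ (h - 1)
          ≤ ∑ x ∈ S, (h.factorial : ℝ) * (((r x).choose h : ℕ) : ℝ) :=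
            Finset.sum_le_sum fun x _ => pointwise_bound h hh (r x)
        _ = (h.factorial : ℝ) * ∑ x ∈ S, (((r x).choose h : ℕ) : ℝ) := by
            rw [Finset.mul_sum]
        _ ≤ (h.factorial : ℝ) * (((g - 1) * m.choose h : ℕ) : ℝ) := by
            apply mul_le_mul_of_nonneg_left _ (by positivity)
            exact_mod_cast F1
        _ = ((g - 1 : ℕ) : ℝ) * ((h.factorial : ℝ) * ((m.choose h : ℕ) : ℝ)) := by
            push_cast; ring
        _ ≤ ((g : ℝ) - 1) * (m : ℝ) ^ h := by
            have hcg : ((g - 1 : ℕ) : ℝ) = (g : ℝ) - 1 := by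
              have : 1 ≤ g := by omega
              push_cast [this]; ring
            rw [hcg]
            exact mul_le_mul_of_nonneg_left F4 (by linarith)
    have cheb : (∑ x ∈ S, (r x : ℝ)) * (∑ x ∈ S, (a x) ^ (h - 1))
        ≤ (s : ℝ) * ∑ x ∈ S, (r x : ℝ) * (a x) ^ (h - 1) := by
      apply MonovaryOn.sum_mul_sum_le_card_mul_sum
      intro i _ j _ hlt
      by_contra hf
      push_neg at hf
      have hrji : (r j : ℝ) ≤ (r i : ℝ) := hf.le
      have haji : a j ≤ a i := by
        rw [hadef]; exact max_le_max (by linarith) le_rfl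
      exact absurd (pow_le_pow_left₀ (ha0 j) haji (h - 1)) (not_le.mpr hlt)
    have pm : (∑ x ∈ S, a x) ^ (h - 1) ≤ (s : ℝ) ^ (h - 2) * ∑ x ∈ S, (a x) ^ (h - 1) := by
      have := pow_sum_div_card_le_sum_pow (s := S) (f := a) (fun x _ => ha0 x) (h - 2)
      rw [show h - 2 + 1 = h - 1 by omega] at this
      rw [div_le_iff₀ (by positivity : (0:ℝ) < (s : ℝ) ^ (h - 2))] at this
      linarith [this]
    have sumA_lb : (n : ℝ) * (m : ℝ) - ((h : ℝ) - 1) * (s : ℝ) ≤ ∑ x ∈ S, a x := by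
      have : ∑ x ∈ S, ((r x : ℝ) - ((h : ℝ) - 1)) ≤ ∑ x ∈ S, a x :=
        Finset.sum_le_sum fun x _ => le_max_left _ _
      rw [Finset.sum_sub_distrib, sumR, Finset.sum_const, nsmul_eq_mul, ← hsdef] at this
      linarith [this]
    by_cases hD : (n : ℝ) * (m : ℝ) - ((h : ℝ) - 1) * (s : ℝ) ≤ 0
    · -- easy case
      have : (n : ℝ) * (m : ℝ) * u ≤ ((h : ℝ) - 1) * (s : ℝ) * u :=
        mul_le_mul_of_nonneg_right (by linarith) hu0
      have hcs : 0 ≤ c * ((m : ℝ) * (s : ℝ)) := by positivity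
      linarith
    · push_neg at hD
      set D : ℝ := (n : ℝ) * (m : ℝ) - ((h : ℝ) - 1) * (s : ℝ) with hDdef
      have hD0 : 0 ≤ D := hD.le
      have key : (n : ℝ) * (m : ℝ) * D ^ (h - 1) ≤ ((g : ℝ) - 1) * (m : ℝ) ^ h * (s : ℝ) ^ (h - 1) := by
        have hDle : D ^ (h - 1) ≤ (∑ x ∈ S, a x) ^ (h - 1) :=
          pow_le_pow_left₀ hD0 sumA_lb (h - 1)
        have hsum_a_nonneg : 0 ≤ ∑ x ∈ S, (a x) ^ (h - 1) :=
          Finset.sum_nonneg fun x _ => by positivity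
        have hnm0 : (0 : ℝ) ≤ (n : ℝ) * (m : ℝ) := by positivity
        calc (n : ℝ) * (m : ℝ) * D ^ (h - 1)
            ≤ (n : ℝ) * (m : ℝ) * (∑ x ∈ S, a x) ^ (h - 1) :=
              mul_le_mul_of_nonneg_left hDle hnm0
          _ ≤ (n : ℝ) * (m : ℝ) * ((s : ℝ) ^ (h - 2) * ∑ x ∈ S, (a x) ^ (h - 1)) :=
              mul_le_mul_of_nonneg_left pm hnm0
          _ = (s : ℝ) ^ (h - 2) * ((∑ x ∈ S, (r x : ℝ)) * (∑ x ∈ S, (a x) ^ (h - 1))) := by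
              rw [sumR]; ring
          _ ≤ (s : ℝ) ^ (h - 2) * ((s : ℝ) * ∑ x ∈ S, (r x : ℝ) * (a x) ^ (h - 1)) :=
              mul_le_mul_of_nonneg_left cheb (by positivity)
          _ ≤ (s : ℝ) ^ (h - 2) * ((s : ℝ) * (((g : ℝ) - 1) * (m : ℝ) ^ h)) :=
              mul_le_mul_of_nonneg_left
                (mul_le_mul_of_nonneg_left sumProd (by positivity)) (by positivity)
          _ = ((g : ℝ) - 1) * (m : ℝ) ^ h * ((s : ℝ) ^ (h - 2) * (s : ℝ)) := by ring
          _ = ((g : ℝ) - 1) * (m : ℝ) ^ h * (s : ℝ) ^ (h - 1) := by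
              rw [← pow_succ, show h - 2 + 1 = h - 1 by omega]
      -- cancel one m
      have key2 : (n : ℝ) * D ^ (h - 1) ≤ ((g : ℝ) - 1) * ((m : ℝ) * (s : ℝ)) ^ (h - 1) := by
        have hmh : (m : ℝ) ^ h = (m : ℝ) ^ (h - 1) * (m : ℝ) := by
          rw [← pow_succ, show h - 1 + 1 = h by omega]
        rw [hmh] at key
        have := (mul_le_mul_iff_of_pos_right hm0).mp (by linarith [key] :
          ((n : ℝ) * D ^ (h - 1)) * (m : ℝ)
            ≤ (((g : ℝ) - 1) * ((m : ℝ) ^ (h - 1) * (s : ℝ) ^ (h - 1))) * (m : ℝ))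
        rw [mul_pow]
        linarith [this]
      -- take (h-1)-th root
      have key3 : D * u ≤ c * ((m : ℝ) * (s : ℝ)) := by
        apply le_of_pow_le_pow_left₀ (by omega : h - 1 ≠ 0) (by positivity)
        rw [mul_pow, mul_pow, hu_pow, hc_pow]
        linarith [key2]
      have hexp : (n : ℝ) * (m : ℝ) * u = D * u + ((h : ℝ) - 1) * (s : ℝ) * u := by
        rw [hDdef]; ring
      linarith [hexp, key3]
  -- conclude from hmain
  have hfinal : (n : ℝ) * u * (m : ℝ) ≤ ((s : ℝ) * (c + ((h : ℝ) - 1) * u / (m : ℝ))) * (m : ℝ) := by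
    have hrhs : ((s : ℝ) * (c + ((h : ℝ) - 1) * u / (m : ℝ))) * (m : ℝ)
        = c * ((m : ℝ) * (s : ℝ)) + ((h : ℝ) - 1) * (s : ℝ) * u := by
      field_simp
    rw [hrhs]
    linarith [hmain]
  exact le_of_mul_le_mul_right hfinal hm0
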